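/- arXiv:2407.11244 — 2 statements merged into one kernel-verified Lean document; each statement's English description precedes it below -/
import Mathlib

section
/- Suppose B ≥ 0 is such that p_Ψ(x) ≤ B for all x ∈ ℝⁿ. Then for all x, y ∈ ℝⁿ, |d_λ(x, y) − ‖x − y‖| ≤ (max(p₀, B)/λ) · ‖x − y‖. Consequently, for every fixed x, y ∈ ℝⁿ, d_λ(x, y) converges to the Euclidean distance ‖x − y‖ as λ → ∞. -/
open MeasureTheory Set Filter

/-- The conformal factor `f_λ(x) := (p₀ + λ)/(p_Ψ(x) + λ)`. -/
noncomputable def fconf {n : ℕ} (p₀ lam : ℝ) (pPsi : EuclideanSpace ℝ (Fin n) → ℝ)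
    (x : EuclideanSpace ℝ (Fin n)) : ℝ :=
  (p₀ + lam) / (pPsi x + lam)

/-- The generative length of a path `γ : [0,1] → ℝⁿ`,
`L_λ(γ) := ∫₀¹ f_λ(γ(t)) ⬝ ‖γ'(t)‖ dt`. -/
noncomputable def genLength {n : ℕ} (p₀ lam : ℝ) (pPsi : EuclideanSpace ℝ (Fin n) → ℝ)
    (γ : ℝ → EuclideanSpace ℝ (Fin n)) : ℝ :=
  ∫ t in (0:ℝ)..1, fconf p₀ lam pPsi (γ t) * ‖deriv γ t‖

/-- The generative distance `d_λ(x,y)`: the infimum of `L_λ(γ)` over all C¹ paths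
`γ` with `γ 0 = x` and `γ 1 = y`. -/
noncomputable def genDist {n : ℕ} (p₀ lam : ℝ) (pPsi : EuclideanSpace ℝ (Fin n) → ℝ)
    (x y : EuclideanSpace ℝ (Fin n)) : ℝ :=
  sInf {L : ℝ | ∃ γ : ℝ → EuclideanSpace ℝ (Fin n),
    ContDiff ℝ 1 γ ∧ γ 0 = x ∧ γ 1 = y ∧ genLength p₀ lam pPsi γ = L}

lemma chord_le_length_aux {n : ℕ} (γ : ℝ → EuclideanSpace ℝ (Fin n)) (hγ : ContDiff ℝ 1 γ) :
    ‖γ 1 - γ 0‖ ≤ ∫ t in (0:ℝ)..1, ‖deriv γ t‖ := by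
  have hderiv : Continuous (deriv γ) := hγ.continuous_deriv le_rfl
  have h1 : γ 1 - γ 0 = ∫ t in (0:ℝ)..1, deriv γ t :=
    (intervalIntegral.integral_deriv_eq_sub (fun t _ => hγ.differentiable one_ne_zero t)
      (hderiv.intervalIntegrable 0 1)).symm
  rw [h1]
  exact intervalIntegral.norm_integral_le_integral_norm (by norm_num)

/-- Lower bound on the generative length of any C¹ path. -/
lemma genLength_lower {n : ℕ} (p₀ lam : ℝ) (hp₀ : 0 < p₀) (hlam : 0 < lam)
    (pPsi : EuclideanSpace ℝ (Fin n) → ℝ) (hcont : Continuous pPsi)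
    (hnonneg : ∀ x, 0 ≤ pPsi x) (B : ℝ) (hB : 0 ≤ B) (hbd : ∀ x, pPsi x ≤ B)
    (γ : ℝ → EuclideanSpace ℝ (Fin n)) (hγ : ContDiff ℝ 1 γ) :
    (p₀ + lam) / (B + lam) * ‖γ 1 - γ 0‖ ≤ genLength p₀ lam pPsi γ := by
  set c : ℝ := (p₀ + lam) / (B + lam) with hc
  have hBlam : 0 < B + lam := by linarith
  have hcpos : 0 < c := div_pos (by linarith) hBlam
  have hderiv : Continuous (deriv γ) := hγ.continuous_deriv le_rfl
  have hfcont : Continuous fun t => fconf p₀ lam pPsi (γ t) * ‖deriv γ t‖ := by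
    apply Continuous.mul _ hderiv.norm
    apply Continuous.div continuous_const ((hcont.comp hγ.continuous).add continuous_const)
    intro t
    have := hnonneg (γ t); exact (show (0:ℝ) < pPsi (γ t) + lam by linarith).ne'
  have hmono : ∀ t ∈ Set.Icc (0:ℝ) 1,
      c * ‖deriv γ t‖ ≤ fconf p₀ lam pPsi (γ t) * ‖deriv γ t‖ := by
    intro t _
    apply mul_le_mul_of_nonneg_right _ (norm_nonneg _)
    unfold fconf
    apply div_le_div_of_nonneg_left (by linarith) _ (by linarith [hbd (γ t)])
    have := hnonneg (γ t); linarith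
  have hint : (∫ t in (0:ℝ)..1, c * ‖deriv γ t‖)
      ≤ ∫ t in (0:ℝ)..1, fconf p₀ lam pPsi (γ t) * ‖deriv γ t‖ := by
    apply intervalIntegral.integral_mono_on (by norm_num)
      ((continuous_const.mul hderiv.norm).intervalIntegrable 0 1)
      (hfcont.intervalIntegrable 0 1) hmono
  have h2 : c * ‖γ 1 - γ 0‖ ≤ ∫ t in (0:ℝ)..1, c * ‖deriv γ t‖ := by
    rw [intervalIntegral.integral_const_mul]
    exact mul_le_mul_of_nonneg_left (chord_le_length_aux γ hγ) hcpos.le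
  exact h2.trans hint

/-- Upper bound: the straight line gives length at most `(p₀+lam)/lam * ‖x - y‖`. -/
lemma genDist_upper {n : ℕ} (p₀ lam : ℝ) (hp₀ : 0 < p₀) (hlam : 0 < lam)
    (pPsi : EuclideanSpace ℝ (Fin n) → ℝ) (hcont : Continuous pPsi)
    (hnonneg : ∀ x, 0 ≤ pPsi x) (x y : EuclideanSpace ℝ (Fin n)) :
    genDist p₀ lam pPsi x y ≤ (p₀ + lam) / lam * ‖x - y‖ := by
  set γ : ℝ → EuclideanSpace ℝ (Fin n) := fun t => x + t • (y - x) with hγdef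
  have hγ : ContDiff ℝ 1 γ := contDiff_const.add (contDiff_id.smul contDiff_const)
  have hγ0 : γ 0 = x := by simp [hγdef]
  have hγ1 : γ 1 = y := by simp [hγdef]
  have hderiv : ∀ t : ℝ, deriv γ t = y - x := by
    intro t
    have : HasDerivAt γ (y - x) t := by
      exact (((hasDerivAt_id t).smul_const (y - x)).const_add x).congr_deriv
        (one_smul ℝ (y - x))
    exact this.deriv
  -- membership
  have hmem : genLength p₀ lam pPsi γ ∈ {L : ℝ | ∃ γ : ℝ → EuclideanSpace ℝ (Fin n),
      ContDiff ℝ 1 γ ∧ γ 0 = x ∧ γ 1 = y ∧ genLength p₀ lam pPsi γ = L} :=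
    ⟨γ, hγ, hγ0, hγ1, rfl⟩
  -- bounded below by 0
  have hbdd : BddBelow {L : ℝ | ∃ γ : ℝ → EuclideanSpace ℝ (Fin n),
      ContDiff ℝ 1 γ ∧ γ 0 = x ∧ γ 1 = y ∧ genLength p₀ lam pPsi γ = L} := by
    refine ⟨0, fun L hL => ?_⟩
    obtain ⟨g, hg, -, -, rfl⟩ := hL
    apply intervalIntegral.integral_nonneg (by norm_num)
    intro t _
    have h1 : 0 ≤ fconf p₀ lam pPsi (g t) := by
      unfold fconf
      have := hnonneg (g t); positivity
    positivity
  have h3 : genLength p₀ lam pPsi γ ≤ (p₀ + lam) / lam * ‖x - y‖ := by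
    have hle : ∀ t ∈ Set.Icc (0:ℝ) 1,
        fconf p₀ lam pPsi (γ t) * ‖deriv γ t‖ ≤ (p₀ + lam) / lam * ‖x - y‖ := by
      intro t _
      rw [hderiv t, show ‖y - x‖ = ‖x - y‖ from norm_sub_rev y x]
      apply mul_le_mul_of_nonneg_right _ (norm_nonneg _)
      unfold fconf
      apply div_le_div_of_nonneg_left (by linarith) hlam
      have := hnonneg (γ t); linarith
    have hfcont : Continuous fun t => fconf p₀ lam pPsi (γ t) * ‖deriv γ t‖ := by
      apply Continuous.mul _ (hγ.continuous_deriv le_rfl).norm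
      apply Continuous.div continuous_const ((hcont.comp hγ.continuous).add continuous_const)
      intro t
      have := hnonneg (γ t); exact (show (0:ℝ) < pPsi (γ t) + lam by linarith).ne'
    calc genLength p₀ lam pPsi γ ≤ ∫ _ in (0:ℝ)..1, (p₀ + lam) / lam * ‖x - y‖ :=
          intervalIntegral.integral_mono_on (by norm_num)
            (hfcont.intervalIntegrable 0 1)
            (intervalIntegrable_const) hle
      _ = (p₀ + lam) / lam * ‖x - y‖ := by simp
  exact (csInf_le hbdd hmem).trans h3

/-- if `p_Ψ ≤ B`, then for every `λ > 0`,
`|d_λ(x,y) − ‖x − y‖| ≤ (max(p₀,B)/λ) ⬝ ‖x − y‖`; consequently `d_λ(x,y) → ‖x − y‖`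
as `λ → ∞`. -/
theorem genDist_tendsto_euclidean {n : ℕ} (hn : 1 ≤ n)
    (p₀ : ℝ) (hp₀ : 0 < p₀)
    (pPsi : EuclideanSpace ℝ (Fin n) → ℝ) (hcont : Continuous pPsi)
    (hnonneg : ∀ x, 0 ≤ pPsi x)
    (B : ℝ) (hB : 0 ≤ B) (hbd : ∀ x, pPsi x ≤ B) :
    (∀ lam : ℝ, 0 < lam → ∀ x y : EuclideanSpace ℝ (Fin n),
      |genDist p₀ lam pPsi x y - ‖x - y‖| ≤ max p₀ B / lam * ‖x - y‖) ∧
    (∀ x y : EuclideanSpace ℝ (Fin n),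
      Tendsto (fun lam : ℝ => genDist p₀ lam pPsi x y) atTop (nhds ‖x - y‖)) := by
  have key : ∀ lam : ℝ, 0 < lam → ∀ x y : EuclideanSpace ℝ (Fin n),
      |genDist p₀ lam pPsi x y - ‖x - y‖| ≤ max p₀ B / lam * ‖x - y‖ := by
    intro lam hlam x y
    have hBlam : 0 < B + lam := by linarith
    -- lower bound on genDist
    have hlow : (p₀ + lam) / (B + lam) * ‖x - y‖ ≤ genDist p₀ lam pPsi x y := by
      apply le_csInf
      · exact ⟨genLength p₀ lam pPsi (fun t => x + t • (y - x)),
          fun t => x + t • (y - x), contDiff_const.add (contDiff_id.smul contDiff_const),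
          by simp, by simp, rfl⟩
      · rintro L ⟨g, hg, hg0, hg1, rfl⟩
        have := genLength_lower p₀ lam hp₀ hlam pPsi hcont hnonneg B hB hbd g hg
        rwa [hg0, hg1, show ‖y - x‖ = ‖x - y‖ from norm_sub_rev y x] at this
    have hup := genDist_upper p₀ lam hp₀ hlam pPsi hcont hnonneg x y
    have hnn : (0:ℝ) ≤ ‖x - y‖ := norm_nonneg _
    rw [abs_le]
    constructor
    · -- -(M/lam)‖x-y‖ ≤ d - ‖x-y‖, i.e. ‖x-y‖ - (M/lam)‖x-y‖ ≤ d
      have h1 : (1 - max p₀ B / lam) * ‖x - y‖ ≤ (p₀ + lam) / (B + lam) * ‖x - y‖ := by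
        apply mul_le_mul_of_nonneg_right _ hnn
        rw [le_div_iff₀ hBlam]
        have hq : 0 ≤ max p₀ B / lam := div_nonneg (le_trans hp₀.le (le_max_left _ _)) hlam.le
        have hql : max p₀ B / lam * lam = max p₀ B := div_mul_cancel₀ _ hlam.ne'
        nlinarith [le_max_right p₀ B, mul_nonneg hq hB]
      nlinarith [h1.trans hlow]
    · have h2 : (p₀ + lam) / lam * ‖x - y‖ ≤ (1 + max p₀ B / lam) * ‖x - y‖ := by
        apply mul_le_mul_of_nonneg_right _ hnn
        rw [div_le_iff₀ hlam, add_mul, div_mul_cancel₀ _ hlam.ne']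
        nlinarith [le_max_left p₀ B]
      nlinarith [hup.trans h2]
  refine ⟨key, fun x y => ?_⟩
  have hbound : Tendsto (fun lam : ℝ => max p₀ B / lam * ‖x - y‖) atTop (nhds 0) := by
    have : Tendsto (fun lam : ℝ => max p₀ B / lam) atTop (nhds 0) :=
      tendsto_const_nhds.div_atTop tendsto_id
    simpa using this.mul_const ‖x - y‖
  rw [show nhds ‖x - y‖ = nhds (‖x - y‖ + 0) by rw [add_zero]]
  apply tendsto_of_tendsto_of_tendsto_of_le_of_le'
    (g := fun lam : ℝ => ‖x - y‖ - max p₀ B / lam * ‖x - y‖)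
    (h := fun lam : ℝ => ‖x - y‖ + max p₀ B / lam * ‖x - y‖)
  · simpa using (tendsto_const_nhds (x := ‖x - y‖)).sub hbound
  · exact (tendsto_const_nhds (x := ‖x - y‖)).add hbound
  · filter_upwards [eventually_gt_atTop 0] with lam hlam
    have := key lam hlam x y
    rw [abs_le] at this; linarith [this.1]
  · filter_upwards [eventually_gt_atTop 0] with lam hlam
    have := key lam hlam x y
    rw [abs_le] at this; linarith [this.2]
end

section
/- Suppose there are constants m > 0 and B ≥ m such that m ≤ p_Ψ(x) ≤ B for all x ∈ ℝⁿ. Define d̃(x, y) := inf of ∫₀¹ (p₀/p_Ψ(γ(t))) · ‖γ′(t)‖ dt over all C¹ paths γ : [0,1] → ℝⁿ with γ(0) = x and γ(1) = y. Then for every x, y ∈ ℝⁿ, d_λ(x, y) → d̃(x, y) as λ → 0⁺; moreover, the convergence is uniform over all pairs x, y lying in any fixed bounded subset of ℝⁿ. -/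
open MeasureTheory Set Filter

/-- The limiting distance `d̃(x,y)`: infimum of `∫₀¹ (p₀/p_Ψ(γ t)) ⬝ ‖γ'(t)‖ dt` over
C¹ paths from `x` to `y`. -/
noncomputable def dTilde {n : ℕ} (p₀ : ℝ) (pPsi : EuclideanSpace ℝ (Fin n) → ℝ)
    (x y : EuclideanSpace ℝ (Fin n)) : ℝ :=
  sInf {L : ℝ | ∃ γ : ℝ → EuclideanSpace ℝ (Fin n),
    ContDiff ℝ 1 γ ∧ γ 0 = x ∧ γ 1 = y ∧
      (∫ t in (0:ℝ)..1, (p₀ / pPsi (γ t)) * ‖deriv γ t‖) = L}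

section Aux

variable {n : ℕ} {p₀ m : ℝ} {pPsi : EuclideanSpace ℝ (Fin n) → ℝ}

/-- The λ-independent length functional. -/
noncomputable def tildeLen (p₀ : ℝ) (pPsi : EuclideanSpace ℝ (Fin n) → ℝ)
    (γ : ℝ → EuclideanSpace ℝ (Fin n)) : ℝ :=
  ∫ t in (0:ℝ)..1, (p₀ / pPsi (γ t)) * ‖deriv γ t‖

lemma dTilde_eq (x y : EuclideanSpace ℝ (Fin n)) :
    dTilde p₀ pPsi x y = sInf {L : ℝ | ∃ γ : ℝ → EuclideanSpace ℝ (Fin n),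
      ContDiff ℝ 1 γ ∧ γ 0 = x ∧ γ 1 = y ∧ tildeLen p₀ pPsi γ = L} := rfl

lemma integrable_fconf (hp₀ : 0 < p₀) (hcont : Continuous pPsi) (hm : 0 < m)
    (hlb : ∀ x, m ≤ pPsi x) {lam : ℝ} (hlam : 0 < lam)
    {γ : ℝ → EuclideanSpace ℝ (Fin n)} (hγ : ContDiff ℝ 1 γ) :
    IntervalIntegrable (fun t => fconf p₀ lam pPsi (γ t) * ‖deriv γ t‖) volume 0 1 := by
  apply Continuous.intervalIntegrable
  have hd : Continuous (deriv γ) := hγ.continuous_deriv le_rfl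
  have hγc : Continuous γ := hγ.continuous
  apply Continuous.mul _ hd.norm
  exact continuous_const.div (by fun_prop)
    (fun t => by have := hlb (γ t); have : 0 < pPsi (γ t) + lam := by linarith
                 exact ne_of_gt this)

lemma integrable_tilde (hp₀ : 0 < p₀) (hcont : Continuous pPsi) (hm : 0 < m)
    (hlb : ∀ x, m ≤ pPsi x)
    {γ : ℝ → EuclideanSpace ℝ (Fin n)} (hγ : ContDiff ℝ 1 γ) :
    IntervalIntegrable (fun t => (p₀ / pPsi (γ t)) * ‖deriv γ t‖) volume 0 1 := by
  apply Continuous.intervalIntegrable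
  have hd : Continuous (deriv γ) := hγ.continuous_deriv le_rfl
  have hγc : Continuous γ := hγ.continuous
  apply Continuous.mul _ hd.norm
  exact continuous_const.div (by fun_prop)
    (fun t => ne_of_gt (lt_of_lt_of_le hm (hlb (γ t))))

lemma genLength_le (hp₀ : 0 < p₀) (hcont : Continuous pPsi) (hm : 0 < m)
    (hlb : ∀ x, m ≤ pPsi x) {lam : ℝ} (hlam : 0 < lam)
    {γ : ℝ → EuclideanSpace ℝ (Fin n)} (hγ : ContDiff ℝ 1 γ) :
    genLength p₀ lam pPsi γ ≤ ((p₀ + lam) / p₀) * tildeLen p₀ pPsi γ := by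
  rw [tildeLen, ← intervalIntegral.integral_const_mul, genLength]
  apply intervalIntegral.integral_mono_on (by norm_num)
    (integrable_fconf hp₀ hcont hm hlb hlam hγ)
    (((integrable_tilde hp₀ hcont hm hlb hγ).const_mul _))
  intro t _
  have h1 : m ≤ pPsi (γ t) := hlb (γ t)
  have h2 : 0 < pPsi (γ t) := lt_of_lt_of_le hm h1
  have key : fconf p₀ lam pPsi (γ t) ≤ (p₀ + lam) / p₀ * (p₀ / pPsi (γ t)) := by
    rw [fconf, div_mul_div_comm, div_le_div_iff₀ (by positivity) (by positivity)]
    nlinarith [mul_pos (mul_pos (add_pos hp₀ hlam) hp₀) hlam]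
  calc fconf p₀ lam pPsi (γ t) * ‖deriv γ t‖
      ≤ ((p₀ + lam) / p₀ * (p₀ / pPsi (γ t))) * ‖deriv γ t‖ := by
        exact mul_le_mul_of_nonneg_right key (norm_nonneg _)
    _ = (p₀ + lam) / p₀ * (p₀ / pPsi (γ t) * ‖deriv γ t‖) := by ring

lemma le_genLength (hp₀ : 0 < p₀) (hcont : Continuous pPsi) (hm : 0 < m)
    (hlb : ∀ x, m ≤ pPsi x) {lam : ℝ} (hlam : 0 < lam)
    {γ : ℝ → EuclideanSpace ℝ (Fin n)} (hγ : ContDiff ℝ 1 γ) :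
    (m / (m + lam)) * tildeLen p₀ pPsi γ ≤ genLength p₀ lam pPsi γ := by
  rw [tildeLen, ← intervalIntegral.integral_const_mul, genLength]
  apply intervalIntegral.integral_mono_on (by norm_num)
    (((integrable_tilde hp₀ hcont hm hlb hγ).const_mul _))
    (integrable_fconf hp₀ hcont hm hlb hlam hγ)
  intro t _
  have h1 : m ≤ pPsi (γ t) := hlb (γ t)
  have h2 : 0 < pPsi (γ t) := lt_of_lt_of_le hm h1
  have key : m / (m + lam) * (p₀ / pPsi (γ t)) ≤ fconf p₀ lam pPsi (γ t) := by
    rw [fconf, div_mul_div_comm, div_le_div_iff₀ (by positivity) (by positivity)]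
    nlinarith [mul_nonneg (mul_nonneg hp₀.le hlam.le) (sub_nonneg.mpr h1),
      mul_pos (mul_pos hlam hm) h2, mul_pos (mul_pos hlam hlam) h2]
  calc m / (m + lam) * (p₀ / pPsi (γ t) * ‖deriv γ t‖)
      = (m / (m + lam) * (p₀ / pPsi (γ t))) * ‖deriv γ t‖ := by ring
    _ ≤ fconf p₀ lam pPsi (γ t) * ‖deriv γ t‖ :=
        mul_le_mul_of_nonneg_right key (norm_nonneg _)

/-- The straight-line path. -/
noncomputable def linePath (x y : EuclideanSpace ℝ (Fin n)) : ℝ → EuclideanSpace ℝ (Fin n) :=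
  fun t => x + t • (y - x)

lemma linePath_contDiff (x y : EuclideanSpace ℝ (Fin n)) : ContDiff ℝ 1 (linePath x y) :=
  contDiff_const.add (contDiff_id.smul contDiff_const)

lemma linePath_deriv (x y : EuclideanSpace ℝ (Fin n)) (t : ℝ) :
    deriv (linePath x y) t = y - x := by
  have : HasDerivAt (linePath x y) (y - x) t := by
    have h := ((hasDerivAt_id t).smul_const (y - x)).const_add x
    simp only [one_smul] at h
    exact h
  exact this.deriv

lemma linePath_zero (x y : EuclideanSpace ℝ (Fin n)) : linePath x y 0 = x := by
  simp [linePath]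

lemma linePath_one (x y : EuclideanSpace ℝ (Fin n)) : linePath x y 1 = y := by
  simp [linePath]

lemma genSet_nonempty (lam : ℝ) (x y : EuclideanSpace ℝ (Fin n)) :
    {L : ℝ | ∃ γ : ℝ → EuclideanSpace ℝ (Fin n),
      ContDiff ℝ 1 γ ∧ γ 0 = x ∧ γ 1 = y ∧ genLength p₀ lam pPsi γ = L}.Nonempty :=
  ⟨_, linePath x y, linePath_contDiff x y, linePath_zero x y, linePath_one x y, rfl⟩

lemma tildeSet_nonempty (x y : EuclideanSpace ℝ (Fin n)) :
    {L : ℝ | ∃ γ : ℝ → EuclideanSpace ℝ (Fin n),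
      ContDiff ℝ 1 γ ∧ γ 0 = x ∧ γ 1 = y ∧ tildeLen p₀ pPsi γ = L}.Nonempty :=
  ⟨_, linePath x y, linePath_contDiff x y, linePath_zero x y, linePath_one x y, rfl⟩

lemma genSet_bddBelow (hp₀ : 0 < p₀) (hm : 0 < m) (hlb : ∀ x, m ≤ pPsi x)
    {lam : ℝ} (hlam : 0 < lam) (x y : EuclideanSpace ℝ (Fin n)) :
    BddBelow {L : ℝ | ∃ γ : ℝ → EuclideanSpace ℝ (Fin n),
      ContDiff ℝ 1 γ ∧ γ 0 = x ∧ γ 1 = y ∧ genLength p₀ lam pPsi γ = L} := by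
  refine ⟨0, fun L hL => ?_⟩
  obtain ⟨γ, hγ, -, -, hLen⟩ := hL
  rw [← hLen, genLength]
  apply intervalIntegral.integral_nonneg (by norm_num)
  intro t _
  have h2 : 0 < pPsi (γ t) := lt_of_lt_of_le hm (hlb (γ t))
  have : 0 ≤ fconf p₀ lam pPsi (γ t) := by rw [fconf]; positivity
  positivity

lemma tildeSet_bddBelow (hp₀ : 0 < p₀) (hm : 0 < m) (hlb : ∀ x, m ≤ pPsi x)
    (x y : EuclideanSpace ℝ (Fin n)) :
    BddBelow {L : ℝ | ∃ γ : ℝ → EuclideanSpace ℝ (Fin n),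
      ContDiff ℝ 1 γ ∧ γ 0 = x ∧ γ 1 = y ∧ tildeLen p₀ pPsi γ = L} := by
  refine ⟨0, fun L hL => ?_⟩
  obtain ⟨γ, hγ, -, -, hLen⟩ := hL
  rw [← hLen, tildeLen]
  apply intervalIntegral.integral_nonneg (by norm_num)
  intro t _
  have h2 : 0 < pPsi (γ t) := lt_of_lt_of_le hm (hlb (γ t))
  positivity

lemma dTilde_nonneg (hp₀ : 0 < p₀) (hm : 0 < m) (hlb : ∀ x, m ≤ pPsi x)
    (x y : EuclideanSpace ℝ (Fin n)) : 0 ≤ dTilde p₀ pPsi x y := by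
  rw [dTilde_eq]
  apply Real.sInf_nonneg
  intro L hL
  obtain ⟨γ, hγ, -, -, hLen⟩ := hL
  rw [← hLen, tildeLen]
  apply intervalIntegral.integral_nonneg (by norm_num)
  intro t _
  have h2 : 0 < pPsi (γ t) := lt_of_lt_of_le hm (hlb (γ t))
  positivity

lemma genDist_le (hp₀ : 0 < p₀) (hcont : Continuous pPsi) (hm : 0 < m)
    (hlb : ∀ x, m ≤ pPsi x) {lam : ℝ} (hlam : 0 < lam)
    (x y : EuclideanSpace ℝ (Fin n)) :
    genDist p₀ lam pPsi x y ≤ ((p₀ + lam) / p₀) * dTilde p₀ pPsi x y := by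
  rw [dTilde_eq, mul_comm, ← div_le_iff₀ (by positivity)]
  apply le_csInf (tildeSet_nonempty x y)
  rintro L ⟨γ, hγ, h0, h1, hLen⟩
  rw [div_le_iff₀ (by positivity), mul_comm]
  calc genDist p₀ lam pPsi x y
      ≤ genLength p₀ lam pPsi γ :=
        csInf_le (genSet_bddBelow hp₀ hm hlb hlam x y) ⟨γ, hγ, h0, h1, rfl⟩
    _ ≤ ((p₀ + lam) / p₀) * tildeLen p₀ pPsi γ := genLength_le hp₀ hcont hm hlb hlam hγ
    _ = ((p₀ + lam) / p₀) * L := by rw [hLen]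

lemma le_genDist (hp₀ : 0 < p₀) (hcont : Continuous pPsi) (hm : 0 < m)
    (hlb : ∀ x, m ≤ pPsi x) {lam : ℝ} (hlam : 0 < lam)
    (x y : EuclideanSpace ℝ (Fin n)) :
    (m / (m + lam)) * dTilde p₀ pPsi x y ≤ genDist p₀ lam pPsi x y := by
  apply le_csInf (genSet_nonempty lam x y)
  rintro L ⟨γ, hγ, h0, h1, hLen⟩
  calc (m / (m + lam)) * dTilde p₀ pPsi x y
      ≤ (m / (m + lam)) * tildeLen p₀ pPsi γ := by
        apply mul_le_mul_of_nonneg_left _ (by positivity)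
        rw [dTilde_eq]
        exact csInf_le (tildeSet_bddBelow hp₀ hm hlb x y) ⟨γ, hγ, h0, h1, rfl⟩
    _ ≤ genLength p₀ lam pPsi γ := le_genLength hp₀ hcont hm hlb hlam hγ
    _ = L := hLen

/-- The master quantitative bound. -/
lemma key_bound (hp₀ : 0 < p₀) (hcont : Continuous pPsi) (hm : 0 < m)
    (hlb : ∀ x, m ≤ pPsi x) {lam : ℝ} (hlam : 0 < lam)
    (x y : EuclideanSpace ℝ (Fin n)) :
    |genDist p₀ lam pPsi x y - dTilde p₀ pPsi x y|
      ≤ lam * (1 / p₀ + 1 / m) * dTilde p₀ pPsi x y := by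
  have hd : 0 ≤ dTilde p₀ pPsi x y := dTilde_nonneg hp₀ hm hlb x y
  have h1 := genDist_le hp₀ hcont hm hlb hlam x y
  have h2 := le_genDist hp₀ hcont hm hlb hlam x y
  set d := dTilde p₀ pPsi x y
  set g := genDist p₀ lam pPsi x y
  rw [abs_le]
  constructor
  · have : d - g ≤ lam * (1 / p₀ + 1 / m) * d := by
      calc d - g ≤ d - (m / (m + lam)) * d := by linarith
        _ = (lam / (m + lam)) * d := by field_simp; ring
        _ ≤ (lam / m) * d := by
            apply mul_le_mul_of_nonneg_right _ hd
            exact div_le_div_of_nonneg_left hlam.le hm (by linarith)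
        _ = lam * (1 / m) * d := by ring
        _ ≤ lam * (1 / p₀ + 1 / m) * d := by
            apply mul_le_mul_of_nonneg_right _ hd
            have : (0:ℝ) < 1 / p₀ := one_div_pos.mpr hp₀
            nlinarith
    linarith
  · calc g - d ≤ (1 + lam / p₀) * d - d := by
          have : (p₀ + lam) / p₀ = 1 + lam / p₀ := by field_simp
          rw [this] at h1; linarith
      _ = lam * (1 / p₀) * d := by ring
      _ ≤ lam * (1 / p₀ + 1 / m) * d := by
          apply mul_le_mul_of_nonneg_right _ hd
          have : (0:ℝ) < 1 / m := one_div_pos.mpr hm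
          nlinarith

lemma dTilde_le_line (hp₀ : 0 < p₀) (hcont : Continuous pPsi) (hm : 0 < m)
    (hlb : ∀ x, m ≤ pPsi x) (x y : EuclideanSpace ℝ (Fin n)) :
    dTilde p₀ pPsi x y ≤ (p₀ / m) * ‖y - x‖ := by
  rw [dTilde_eq]
  calc sInf _ ≤ tildeLen p₀ pPsi (linePath x y) :=
        csInf_le (tildeSet_bddBelow hp₀ hm hlb x y)
          ⟨linePath x y, linePath_contDiff x y, linePath_zero x y, linePath_one x y, rfl⟩
    _ ≤ (p₀ / m) * ‖y - x‖ := by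
        rw [tildeLen]
        have : ((p₀ / m) * ‖y - x‖) = ∫ t in (0:ℝ)..1, (p₀ / m) * ‖y - x‖ := by simp
        rw [this]
        apply intervalIntegral.integral_mono_on (by norm_num)
          (integrable_tilde hp₀ hcont hm hlb (linePath_contDiff x y))
          (intervalIntegrable_const)
        intro t _
        rw [linePath_deriv]
        apply mul_le_mul_of_nonneg_right _ (norm_nonneg _)
        apply div_le_div_of_nonneg_left hp₀.le hm (hlb _)

end Aux

/-- if `0 < m ≤ p_Ψ ≤ B`, then `d_λ(x,y) → d̃(x,y)` as `λ → 0⁺` for every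
`x, y`, and the convergence is uniform over pairs `x, y` in any fixed bounded set. -/
theorem genDist_tendsto_dTilde {n : ℕ} (hn : 1 ≤ n)
    (p₀ : ℝ) (hp₀ : 0 < p₀)
    (pPsi : EuclideanSpace ℝ (Fin n) → ℝ) (hcont : Continuous pPsi)
    (hnonneg : ∀ x, 0 ≤ pPsi x)
    (m B : ℝ) (hm : 0 < m) (hmB : m ≤ B)
    (hlb : ∀ x, m ≤ pPsi x) (hub : ∀ x, pPsi x ≤ B) :
    (∀ x y : EuclideanSpace ℝ (Fin n),
      Tendsto (fun lam : ℝ => genDist p₀ lam pPsi x y) (nhdsWithin 0 (Ioi 0))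
        (nhds (dTilde p₀ pPsi x y))) ∧
    (∀ Ω : Set (EuclideanSpace ℝ (Fin n)), Bornology.IsBounded Ω →
      ∀ ε : ℝ, 0 < ε → ∃ δ : ℝ, 0 < δ ∧ ∀ lam : ℝ, 0 < lam → lam < δ →
        ∀ x ∈ Ω, ∀ y ∈ Ω,
          |genDist p₀ lam pPsi x y - dTilde p₀ pPsi x y| < ε) := by
  have hc : 0 < 1 / p₀ + 1 / m := by positivity
  constructor
  · intro x y
    set d := dTilde p₀ pPsi x y with hdset
    have hd : 0 ≤ d := dTilde_nonneg hp₀ hm hlb x y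
    rw [Metric.tendsto_nhdsWithin_nhds]
    intro ε hε
    refine ⟨ε / ((1 / p₀ + 1 / m) * (d + 1)), by positivity, ?_⟩
    intro lam hlam hdist
    rw [Real.dist_eq]
    have hlam0 : 0 < lam := hlam
    calc |genDist p₀ lam pPsi x y - d|
        ≤ lam * (1 / p₀ + 1 / m) * d := key_bound hp₀ hcont hm hlb hlam0 x y
      _ ≤ lam * ((1 / p₀ + 1 / m) * (d + 1)) := by nlinarith [mul_pos hlam0 hc]
      _ < ε := by
          have hlt : lam < ε / ((1 / p₀ + 1 / m) * (d + 1)) := by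
            rwa [Real.dist_eq, sub_zero, abs_of_pos hlam0] at hdist
          rw [lt_div_iff₀ (by positivity)] at hlt
          linarith
  · intro Ω hΩ ε hε
    obtain ⟨C, hC⟩ := hΩ.subset_closedBall 0
    have hC0 : 0 ≤ C ∨ Ω = ∅ := by
      rcases Ω.eq_empty_or_nonempty with h | ⟨z, hz⟩
      · exact Or.inr h
      · left
        have := hC hz
        simp only [Metric.mem_closedBall] at this
        exact le_trans dist_nonneg this
    rcases hC0 with hC0 | hempty
    · set D : ℝ := (p₀ / m) * (2 * C) with hD
      have hD0 : 0 ≤ D := by positivity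
      refine ⟨ε / ((1 / p₀ + 1 / m) * (D + 1)), by positivity, ?_⟩
      intro lam hlam hlt x hx y hy
      have hxy : ‖y - x‖ ≤ 2 * C := by
        have h1 : dist x 0 ≤ C := by simpa [Metric.mem_closedBall] using hC hx
        have h2 : dist y 0 ≤ C := by simpa [Metric.mem_closedBall] using hC hy
        rw [dist_eq_norm, sub_zero] at h1 h2
        calc ‖y - x‖ ≤ ‖y‖ + ‖x‖ := norm_sub_le _ _
          _ ≤ 2 * C := by linarith
      have hdle : dTilde p₀ pPsi x y ≤ D := by
        calc dTilde p₀ pPsi x y ≤ (p₀ / m) * ‖y - x‖ := dTilde_le_line hp₀ hcont hm hlb x y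
          _ ≤ D := by rw [hD]; apply mul_le_mul_of_nonneg_left hxy (by positivity)
      have hd0 : 0 ≤ dTilde p₀ pPsi x y := dTilde_nonneg hp₀ hm hlb x y
      calc |genDist p₀ lam pPsi x y - dTilde p₀ pPsi x y|
          ≤ lam * (1 / p₀ + 1 / m) * dTilde p₀ pPsi x y := key_bound hp₀ hcont hm hlb hlam x y
        _ ≤ lam * ((1 / p₀ + 1 / m) * (D + 1)) := by
            nlinarith [mul_pos hlam hc,
              mul_le_mul_of_nonneg_left hdle (mul_nonneg hlam.le hc.le)]
        _ < ε := by
            rw [lt_div_iff₀ (by positivity)] at hlt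
            linarith
    · refine ⟨1, one_pos, ?_⟩
      intro lam _ _ x hx
      rw [hempty] at hx
      exact absurd hx (Set.notMem_empty x)
end
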